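/- For all x, y ∈ 𝔹ⁿ (the open unit ball of ℝⁿ), p_{𝔹ⁿ}(x,y) ≤ |x−y|/√(|x−y|² + (1−|x|²)(1−|y|²)) ≤ 2·p_{𝔹ⁿ}(x,y). (The middle quantity equals tanh(ρ_{𝔹ⁿ}(x,y)/2), where ρ_{𝔹ⁿ} is the hyperbolic metric of the unit ball.) -/

import Mathlib

open Metric Set

/-- The triangular ratio metric `s_G(x,y) = sup_{z ∈ ∂G} |x-y|/(|x-z|+|z-y|)`. -/
noncomputable def triangularRatio {n : ℕ} (G : Set (EuclideanSpace ℝ (Fin n)))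
    (x y : EuclideanSpace ℝ (Fin n)) : ℝ :=
  ⨆ z : frontier G, dist x y / (dist x z.1 + dist z.1 y)

/-- Distance to the boundary `d_G(x) = dist(x, ∂G)`. -/
noncomputable def distBd {n : ℕ} (G : Set (EuclideanSpace ℝ (Fin n)))
    (x : EuclideanSpace ℝ (Fin n)) : ℝ :=
  Metric.infDist x (frontier G)

/-- The distance ratio metric `j_G(x,y) = log(1 + |x-y|/min{d_G(x), d_G(y)})`. -/
noncomputable def distRatio {n : ℕ} (G : Set (EuclideanSpace ℝ (Fin n)))
    (x y : EuclideanSpace ℝ (Fin n)) : ℝ :=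
  Real.log (1 + dist x y / min (distBd G x) (distBd G y))

/-- The quantity `p_G(x,y) = |x-y| / √(|x-y|² + 4 d_G(x) d_G(y))`. -/
noncomputable def pMetric {n : ℕ} (G : Set (EuclideanSpace ℝ (Fin n)))
    (x y : EuclideanSpace ℝ (Fin n)) : ℝ :=
  dist x y / Real.sqrt (dist x y ^ 2 + 4 * distBd G x * distBd G y)

/-- For all `x, y` in the unit ball `𝔹ⁿ`,
`p_{𝔹ⁿ}(x,y) ≤ tanh(ρ_{𝔹ⁿ}(x,y)/2) ≤ 2 p_{𝔹ⁿ}(x,y)`, where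
`tanh(ρ_{𝔹ⁿ}(x,y)/2) = |x-y| / √(|x-y|² + (1-|x|²)(1-|y|²))`. -/


lemma infDist_sphere_one {n : ℕ} [Nontrivial (EuclideanSpace ℝ (Fin n))]
    (x : EuclideanSpace ℝ (Fin n)) (hx : ‖x‖ ≤ 1) :
    Metric.infDist x (Metric.sphere (0 : EuclideanSpace ℝ (Fin n)) 1) = 1 - ‖x‖ := by
  have hne : (Metric.sphere (0 : EuclideanSpace ℝ (Fin n)) 1).Nonempty :=
    NormedSpace.sphere_nonempty.2 zero_le_one
  apply le_antisymm
  · -- exhibit a point at distance 1 - ‖x‖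
    rcases eq_or_ne x 0 with rfl | hx0
    · obtain ⟨u, hu⟩ := exists_norm_eq (EuclideanSpace ℝ (Fin n)) zero_le_one
      calc Metric.infDist 0 (Metric.sphere (0 : EuclideanSpace ℝ (Fin n)) 1) ≤ dist 0 u :=
            Metric.infDist_le_dist_of_mem (by simp [hu])
        _ = 1 - ‖(0 : EuclideanSpace ℝ (Fin n))‖ := by simp [dist_eq_norm, hu]
    · have hnx : (0:ℝ) < ‖x‖ := norm_pos_iff.2 hx0
      set u : EuclideanSpace ℝ (Fin n) := ‖x‖⁻¹ • x with hu
      have hun : ‖u‖ = 1 := by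
        rw [hu, norm_smul, norm_inv, norm_norm, inv_mul_cancel₀ hnx.ne']
      have hd : dist x u = 1 - ‖x‖ := by
        rw [dist_eq_norm, hu]
        have : x - ‖x‖⁻¹ • x = (1 - ‖x‖⁻¹) • x := by
          rw [sub_smul, one_smul]
        rw [this, norm_smul, Real.norm_eq_abs]
        have h1 : ‖x‖⁻¹ ≥ 1 := by
          rw [ge_iff_le, le_inv_comm₀ one_pos hnx]; simpa using hx
        rw [abs_of_nonpos (by linarith)]
        field_simp
        ring
      calc Metric.infDist x (Metric.sphere (0 : EuclideanSpace ℝ (Fin n)) 1) ≤ dist x u :=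
            Metric.infDist_le_dist_of_mem (by simp [hun])
        _ = 1 - ‖x‖ := hd
  · rw [← not_lt, Metric.infDist_lt_iff hne]
    rintro ⟨z, hz, hlt⟩
    have hz1 : ‖z‖ = 1 := by simpa using hz
    have h2 := norm_sub_norm_le z x
    rw [hz1] at h2
    have : dist x z = ‖z - x‖ := by rw [dist_eq_norm, norm_sub_rev]
    linarith [this ▸ hlt]

theorem pB_le_tanh_half_rho_le_two_pB {n : ℕ}
    (x y : EuclideanSpace ℝ (Fin n)) (hx : ‖x‖ < 1) (hy : ‖y‖ < 1) :
    pMetric (Metric.ball (0 : EuclideanSpace ℝ (Fin n)) 1) x y ≤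
        ‖x - y‖ / Real.sqrt (‖x - y‖ ^ 2 + (1 - ‖x‖ ^ 2) * (1 - ‖y‖ ^ 2)) ∧
      ‖x - y‖ / Real.sqrt (‖x - y‖ ^ 2 + (1 - ‖x‖ ^ 2) * (1 - ‖y‖ ^ 2)) ≤
        2 * pMetric (Metric.ball (0 : EuclideanSpace ℝ (Fin n)) 1) x y := by
  rcases subsingleton_or_nontrivial (EuclideanSpace ℝ (Fin n)) with hs | hs
  · have hxy : x = y := Subsingleton.elim x y
    simp [pMetric, hxy, dist_self]
  · have hfb : frontier (Metric.ball (0 : EuclideanSpace ℝ (Fin n)) 1) =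
        Metric.sphere 0 1 := frontier_ball 0 one_ne_zero
    have hdx : distBd (Metric.ball (0 : EuclideanSpace ℝ (Fin n)) 1) x = 1 - ‖x‖ := by
      rw [distBd, hfb, infDist_sphere_one x hx.le]
    have hdy : distBd (Metric.ball (0 : EuclideanSpace ℝ (Fin n)) 1) y = 1 - ‖y‖ := by
      rw [distBd, hfb, infDist_sphere_one y hy.le]
    rw [pMetric, hdx, hdy, dist_eq_norm]
    set d := ‖x - y‖ with hd
    have hd0 : 0 ≤ d := norm_nonneg _
    set a := 1 - ‖x‖ with ha
    set b := 1 - ‖y‖ with hb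
    have ha0 : 0 < a := by simp [ha]; linarith
    have hb0 : 0 < b := by simp [hb]; linarith
    have hA : (1 - ‖x‖ ^ 2) = a * (1 + ‖x‖) := by ring
    have hB : (1 - ‖y‖ ^ 2) = b * (1 + ‖y‖) := by ring
    have hxn : 0 ≤ ‖x‖ := norm_nonneg _
    have hyn : 0 ≤ ‖y‖ := norm_nonneg _
    have h4 : (1 + ‖x‖) * (1 + ‖y‖) ≤ 4 := by nlinarith
    have h1' : (1:ℝ) ≤ (1 + ‖x‖) * (1 + ‖y‖) := by nlinarith
    have hab : 0 < a * b := mul_pos ha0 hb0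
    have hABle : (1 - ‖x‖ ^ 2) * (1 - ‖y‖ ^ 2) ≤ 4 * a * b := by
      rw [hA, hB]
      calc a * (1 + ‖x‖) * (b * (1 + ‖y‖)) = (a * b) * ((1 + ‖x‖) * (1 + ‖y‖)) := by ring
        _ ≤ (a * b) * 4 := mul_le_mul_of_nonneg_left h4 hab.le
        _ = 4 * a * b := by ring
    have hABge : a * b ≤ (1 - ‖x‖ ^ 2) * (1 - ‖y‖ ^ 2) := by
      rw [hA, hB]
      calc a * b = (a * b) * 1 := by ring
        _ ≤ (a * b) * ((1 + ‖x‖) * (1 + ‖y‖)) := mul_le_mul_of_nonneg_left h1' hab.le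
        _ = a * (1 + ‖x‖) * (b * (1 + ‖y‖)) := by ring
    have hAB0 : 0 < (1 - ‖x‖ ^ 2) * (1 - ‖y‖ ^ 2) := by nlinarith
    have h1 : (0:ℝ) < d ^ 2 + (1 - ‖x‖ ^ 2) * (1 - ‖y‖ ^ 2) := by nlinarith
    have h2 : (0:ℝ) < d ^ 2 + 4 * a * b := by nlinarith
    have hs1 : 0 < Real.sqrt (d ^ 2 + (1 - ‖x‖ ^ 2) * (1 - ‖y‖ ^ 2)) := Real.sqrt_pos.2 h1
    have hs2 : 0 < Real.sqrt (d ^ 2 + 4 * a * b) := Real.sqrt_pos.2 h2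
    constructor
    · apply div_le_div_of_nonneg_left hd0 hs1
      exact Real.sqrt_le_sqrt (by linarith)
    · rw [mul_div_assoc', div_le_div_iff₀ hs1 hs2]
      have hkey : Real.sqrt (d ^ 2 + 4 * a * b) ≤
          2 * Real.sqrt (d ^ 2 + (1 - ‖x‖ ^ 2) * (1 - ‖y‖ ^ 2)) := by
        have : (2:ℝ) * Real.sqrt (d ^ 2 + (1 - ‖x‖ ^ 2) * (1 - ‖y‖ ^ 2)) =
            Real.sqrt (4 * (d ^ 2 + (1 - ‖x‖ ^ 2) * (1 - ‖y‖ ^ 2))) := by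
          rw [Real.sqrt_mul (by norm_num), show Real.sqrt 4 = 2 by
            rw [show (4:ℝ) = 2^2 by norm_num, Real.sqrt_sq (by norm_num)]]
        rw [this]
        exact Real.sqrt_le_sqrt (by nlinarith)
      calc d * Real.sqrt (d ^ 2 + 4 * a * b)
          ≤ d * (2 * Real.sqrt (d ^ 2 + (1 - ‖x‖ ^ 2) * (1 - ‖y‖ ^ 2))) :=
            mul_le_mul_of_nonneg_left hkey hd0
        _ = 2 * d * Real.sqrt (d ^ 2 + (1 - ‖x‖ ^ 2) * (1 - ‖y‖ ^ 2)) := by ring
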